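/- Let x_u, x_v ∈ [0,1], let x = d_L(x_u, x_v), and let r ∈ [0, 1/2]. If x ≤ 2r and x + 2r ≤ 1, then the Lebesgue measure of the set {z ∈ [0,1] : d_L(z, x_u) ≤ r and d_L(z, x_v) ≤ r} equals 2r − x. If x > 2r, then this set has Lebesgue measure 0. -/

import Mathlib

open MeasureTheory

set_option maxHeartbeats 1000000

/-- The circular distance on `[0,1]`. -/
noncomputable def dL (x y : ℝ) : ℝ := min |x - y| (1 - |x - y|)

lemma dL_le_abs' {z c r : ℝ} (h1 : c - r ≤ z) (h2 : z ≤ c + r) : dL z c ≤ r :=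
  le_trans (min_le_left _ _) (abs_le.mpr ⟨by linarith, by linarith⟩)

lemma dL_le_wrap_hi {z c r : ℝ} (h : c + 1 - r ≤ z) : dL z c ≤ r := by
  have h' : 1 - r ≤ |z - c| := le_trans (by linarith) (le_abs_self _)
  exact le_trans (min_le_right _ _) (by linarith)

lemma dL_le_wrap_lo {z c r : ℝ} (h : z ≤ c - 1 + r) : dL z c ≤ r := by
  have h' : 1 - r ≤ |z - c| := by
    rw [abs_sub_comm]
    exact le_trans (by linarith) (le_abs_self _)
  exact le_trans (min_le_right _ _) (by linarith)

lemma dL_cases {z c r : ℝ} (h : dL z c ≤ r) :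
    (c - r ≤ z ∧ z ≤ c + r) ∨ c + 1 - r ≤ z ∨ z ≤ c - 1 + r := by
  rcases le_or_gt |z - c| r with h1 | h1
  · rw [abs_le] at h1
    exact Or.inl ⟨by linarith [h1.1], by linarith [h1.2]⟩
  · have h2 : 1 - |z - c| ≤ r := by
      rcases min_le_iff.mp h with h' | h'
      · linarith
      · exact h'
    rcases abs_cases (z - c) with ⟨he, _⟩ | ⟨he, _⟩ <;> rw [he] at h2
    · exact Or.inr (Or.inl (by linarith))
    · exact Or.inr (Or.inr (by linarith))

lemma ofReal_sum9_le {a1 a2 a3 a4 a5 a6 a7 a8 a9 t1 t2 t3 t4 t5 t6 t7 t8 t9 : ℝ}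
    (h1 : a1 ≤ t1) (h2 : a2 ≤ t2) (h3 : a3 ≤ t3) (h4 : a4 ≤ t4) (h5 : a5 ≤ t5)
    (h6 : a6 ≤ t6) (h7 : a7 ≤ t7) (h8 : a8 ≤ t8) (h9 : a9 ≤ t9)
    (n1 : 0 ≤ t1) (n2 : 0 ≤ t2) (n3 : 0 ≤ t3) (n4 : 0 ≤ t4) (n5 : 0 ≤ t5)
    (n6 : 0 ≤ t6) (n7 : 0 ≤ t7) (n8 : 0 ≤ t8) (n9 : 0 ≤ t9) :
    ENNReal.ofReal a1 + (ENNReal.ofReal a2 + (ENNReal.ofReal a3 + (ENNReal.ofReal a4 +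
      (ENNReal.ofReal a5 + (ENNReal.ofReal a6 + (ENNReal.ofReal a7 + (ENNReal.ofReal a8 +
      ENNReal.ofReal a9))))))) ≤
    ENNReal.ofReal (t1 + t2 + t3 + t4 + t5 + t6 + t7 + t8 + t9) := by
  have e2 : t1 + t2 + t3 + t4 + t5 + t6 + t7 + t8 + t9
      = t1 + (t2 + (t3 + (t4 + (t5 + (t6 + (t7 + (t8 + t9))))))) := by ring
  rw [e2, ENNReal.ofReal_add n1 (by linarith), ENNReal.ofReal_add n2 (by linarith),
    ENNReal.ofReal_add n3 (by linarith), ENNReal.ofReal_add n4 (by linarith),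
    ENNReal.ofReal_add n5 (by linarith), ENNReal.ofReal_add n6 (by linarith),
    ENNReal.ofReal_add n7 (by linarith), ENNReal.ofReal_add n8 n9]
  exact add_le_add (ENNReal.ofReal_le_ofReal h1) (add_le_add (ENNReal.ofReal_le_ofReal h2)
    (add_le_add (ENNReal.ofReal_le_ofReal h3) (add_le_add (ENNReal.ofReal_le_ofReal h4)
    (add_le_add (ENNReal.ofReal_le_ofReal h5) (add_le_add (ENNReal.ofReal_le_ofReal h6)
    (add_le_add (ENNReal.ofReal_le_ofReal h7) (add_le_add (ENNReal.ofReal_le_ofReal h8)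
    (ENNReal.ofReal_le_ofReal h9))))))))

theorem gbm_aux (xu xv r : ℝ)
    (hxu : xu ∈ Set.Icc (0 : ℝ) 1) (hxv : xv ∈ Set.Icc (0 : ℝ) 1)
    (hr : r ∈ Set.Icc (0 : ℝ) (1 / 2)) (hle : xu ≤ xv) :
    (dL xu xv ≤ 2 * r ∧ dL xu xv + 2 * r ≤ 1 →
      volume {z : ℝ | z ∈ Set.Icc (0 : ℝ) 1 ∧ dL z xu ≤ r ∧ dL z xv ≤ r}
        = ENNReal.ofReal (2 * r - dL xu xv)) ∧
    (2 * r < dL xu xv →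
      volume {z : ℝ | z ∈ Set.Icc (0 : ℝ) 1 ∧ dL z xu ≤ r ∧ dL z xv ≤ r} = 0) := by
  obtain ⟨hu0, hu1⟩ := hxu
  obtain ⟨hv0, hv1⟩ := hxv
  obtain ⟨hr0, hr1⟩ := hr
  have habs : |xu - xv| = xv - xu := by
    rw [abs_sub_comm]; exact abs_of_nonneg (by linarith)
  have hdL : dL xu xv = min (xv - xu) (1 - (xv - xu)) := by unfold dL; rw [habs]
  have m1 : min 1 (xu + r) ≤ xu + r := min_le_right _ _
  have m1' : min 1 (xu + r) ≤ 1 := min_le_left _ _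
  have m2 : min 1 (xv + r) ≤ xv + r := min_le_right _ _
  have m2' : min 1 (xv + r) ≤ 1 := min_le_left _ _
  have M1 : xv - r ≤ max 0 (xv - r) := le_max_right _ _
  have M1' : (0:ℝ) ≤ max 0 (xv - r) := le_max_left _ _
  have M2 : xu - r ≤ max 0 (xu - r) := le_max_right _ _
  have M2' : (0:ℝ) ≤ max 0 (xu - r) := le_max_left _ _
  set S := {z : ℝ | z ∈ Set.Icc (0 : ℝ) 1 ∧ dL z xu ≤ r ∧ dL z xv ≤ r} with hSdef
  have hcov : S ⊆
      Set.Icc (max 0 (xv - r)) (min 1 (xu + r)) ∪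
      (Set.Icc (xv + 1 - r) (min 1 (xu + r)) ∪
      (Set.Icc (max 0 (xu - r)) (xv - 1 + r) ∪
      (Set.Icc (xu + 1 - r) (min 1 (xv + r)) ∪
      (Set.Icc (xv + 1 - r) 1 ∪
      (Set.Icc (xu + 1 - r) (xv - 1 + r) ∪
      (Set.Icc (max 0 (xv - r)) (xu - 1 + r) ∪
      (Set.Icc (xv + 1 - r) (xu - 1 + r) ∪
      Set.Icc 0 (xu - 1 + r)))))))) := by
    intro z hz
    obtain ⟨hz01, hu, hv⟩ := hz
    obtain ⟨hz0, hz1⟩ := hz01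
    rcases dL_cases hu with ⟨hu1', hu2'⟩ | hu' | hu' <;>
      rcases dL_cases hv with ⟨hv1', hv2'⟩ | hv' | hv'
    · exact Or.inl (Set.mem_Icc.mpr ⟨max_le hz0 (by linarith), le_min hz1 (by linarith)⟩)
    · exact Or.inr (Or.inl (Set.mem_Icc.mpr ⟨hv', le_min hz1 (by linarith)⟩))
    · exact Or.inr (Or.inr (Or.inl (Set.mem_Icc.mpr
        ⟨max_le hz0 (by linarith), by linarith⟩)))
    · exact Or.inr (Or.inr (Or.inr (Or.inl (Set.mem_Icc.mpr
        ⟨hu', le_min hz1 (by linarith)⟩))))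
    · exact Or.inr (Or.inr (Or.inr (Or.inr (Or.inl (Set.mem_Icc.mpr ⟨hv', hz1⟩)))))
    · exact Or.inr (Or.inr (Or.inr (Or.inr (Or.inr (Or.inl (Set.mem_Icc.mpr
        ⟨hu', by linarith⟩))))))
    · exact Or.inr (Or.inr (Or.inr (Or.inr (Or.inr (Or.inr (Or.inl (Set.mem_Icc.mpr
        ⟨max_le hz0 (by linarith), hu'⟩)))))))
    · exact Or.inr (Or.inr (Or.inr (Or.inr (Or.inr (Or.inr (Or.inr (Or.inl
        (Set.mem_Icc.mpr ⟨hv', hu'⟩))))))))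
    · exact Or.inr (Or.inr (Or.inr (Or.inr (Or.inr (Or.inr (Or.inr (Or.inr
        (Set.mem_Icc.mpr ⟨hz0, hu'⟩))))))))
  have hub : volume S ≤
      volume (Set.Icc (max 0 (xv - r)) (min 1 (xu + r))) +
      (volume (Set.Icc (xv + 1 - r) (min 1 (xu + r))) +
      (volume (Set.Icc (max 0 (xu - r)) (xv - 1 + r)) +
      (volume (Set.Icc (xu + 1 - r) (min 1 (xv + r))) +
      (volume (Set.Icc (xv + 1 - r) 1) +
      (volume (Set.Icc (xu + 1 - r) (xv - 1 + r)) +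
      (volume (Set.Icc (max 0 (xv - r)) (xu - 1 + r)) +
      (volume (Set.Icc (xv + 1 - r) (xu - 1 + r)) +
      volume (Set.Icc 0 (xu - 1 + r))))))))) := by
    refine (measure_mono hcov).trans ?_
    iterate 8 refine le_trans (measure_union_le _ _) (add_le_add le_rfl ?_)
    exact le_rfl
  simp only [Real.volume_Icc] at hub
  constructor
  · rintro ⟨h1, h2⟩
    rcases le_or_gt (xv - xu) (1/2 : ℝ) with hA | hA
    · -- short arc is the direct one
      have hd : dL xu xv = xv - xu := by rw [hdL]; exact min_eq_left (by linarith)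
      rw [hd] at h1 h2 ⊢
      rcases lt_or_ge xv r with hc | hc
      · -- xv < r : pieces [0, xu+r] and [xv+1-r, 1]
        refine le_antisymm (hub.trans ?_) ?_
        · refine le_trans (ofReal_sum9_le (t1 := xu + r) (t2 := 0) (t3 := 0) (t4 := 0)
            (t5 := r - xv) (t6 := 0) (t7 := 0) (t8 := 0) (t9 := 0)
            (by linarith) (by linarith) (by linarith) (by linarith) (by linarith)
            (by linarith) (by linarith) (by linarith) (by linarith)
            (by linarith) le_rfl le_rfl le_rfl (by linarith)
            le_rfl le_rfl le_rfl le_rfl) ?_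
          exact ENNReal.ofReal_le_ofReal (by linarith)
        · have hsub : Set.Ico 0 (xu + r) ∪ Set.Ioc (xv + 1 - r) 1 ⊆ S := by
            rintro z (⟨hz0, hz1⟩ | ⟨hz0, hz1⟩)
            · exact ⟨Set.mem_Icc.mpr ⟨hz0, by linarith⟩,
                dL_le_abs' (by linarith) (by linarith),
                dL_le_abs' (by linarith) (by linarith)⟩
            · exact ⟨Set.mem_Icc.mpr ⟨by linarith, hz1⟩,
                dL_le_wrap_hi (by linarith), dL_le_wrap_hi (by linarith)⟩
          have hdisj : Disjoint (Set.Ico 0 (xu + r)) (Set.Ioc (xv + 1 - r) 1) := by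
            rw [Set.disjoint_left]
            rintro z ⟨hz0, hz1⟩ ⟨hz0', hz1'⟩
            linarith
          calc ENNReal.ofReal (2 * r - (xv - xu))
              = ENNReal.ofReal (xu + r - 0) + ENNReal.ofReal (1 - (xv + 1 - r)) := by
                rw [← ENNReal.ofReal_add (by linarith) (by linarith)]; congr 1; ring
            _ = volume (Set.Ico 0 (xu + r) ∪ Set.Ioc (xv + 1 - r) 1) := by
                rw [measure_union hdisj measurableSet_Ioc, Real.volume_Ico, Real.volume_Ioc]
            _ ≤ volume S := measure_mono hsub
      · rcases lt_or_ge (1 - r) xu with hc2 | hc2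
        · -- xu > 1 - r : pieces [0, xu-1+r] and [xv-r, 1]
          refine le_antisymm (hub.trans ?_) ?_
          · refine le_trans (ofReal_sum9_le (t1 := 1 - (xv - r)) (t2 := 0) (t3 := 0)
              (t4 := 0) (t5 := 0) (t6 := 0) (t7 := 0) (t8 := 0) (t9 := xu - 1 + r)
              (by linarith) (by linarith) (by linarith) (by linarith) (by linarith)
              (by linarith) (by linarith) (by linarith) (by linarith)
              (by linarith) le_rfl le_rfl le_rfl le_rfl
              le_rfl le_rfl le_rfl (by linarith)) ?_
            exact ENNReal.ofReal_le_ofReal (by linarith)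
          · have hsub : Set.Ico 0 (xu - 1 + r) ∪ Set.Ioc (xv - r) 1 ⊆ S := by
              rintro z (⟨hz0, hz1⟩ | ⟨hz0, hz1⟩)
              · exact ⟨Set.mem_Icc.mpr ⟨hz0, by linarith⟩,
                  dL_le_wrap_lo (by linarith), dL_le_wrap_lo (by linarith)⟩
              · exact ⟨Set.mem_Icc.mpr ⟨by linarith, hz1⟩,
                  dL_le_abs' (by linarith) (by linarith),
                  dL_le_abs' (by linarith) (by linarith)⟩
            have hdisj : Disjoint (Set.Ico 0 (xu - 1 + r)) (Set.Ioc (xv - r) 1) := by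
              rw [Set.disjoint_left]
              rintro z ⟨hz0, hz1⟩ ⟨hz0', hz1'⟩
              linarith
            calc ENNReal.ofReal (2 * r - (xv - xu))
                = ENNReal.ofReal (xu - 1 + r - 0) + ENNReal.ofReal (1 - (xv - r)) := by
                  rw [← ENNReal.ofReal_add (by linarith) (by linarith)]; congr 1; ring
              _ = volume (Set.Ico 0 (xu - 1 + r) ∪ Set.Ioc (xv - r) 1) := by
                  rw [measure_union hdisj measurableSet_Ioc, Real.volume_Ico, Real.volume_Ioc]
              _ ≤ volume S := measure_mono hsub
        · -- generic : single piece [xv-r, xu+r]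
          refine le_antisymm (hub.trans ?_) ?_
          · refine le_trans (ofReal_sum9_le (t1 := 2 * r - (xv - xu)) (t2 := 0) (t3 := 0)
              (t4 := 0) (t5 := 0) (t6 := 0) (t7 := 0) (t8 := 0) (t9 := 0)
              (by linarith) (by linarith) (by linarith) (by linarith) (by linarith)
              (by linarith) (by linarith) (by linarith) (by linarith)
              (by linarith) le_rfl le_rfl le_rfl le_rfl
              le_rfl le_rfl le_rfl le_rfl) ?_
            exact ENNReal.ofReal_le_ofReal (by linarith)
          · have hsub : Set.Icc (xv - r) (xu + r) ⊆ S := by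
              rintro z ⟨hz0, hz1⟩
              exact ⟨Set.mem_Icc.mpr ⟨by linarith, by linarith⟩,
                dL_le_abs' (by linarith) (by linarith),
                dL_le_abs' (by linarith) (by linarith)⟩
            calc ENNReal.ofReal (2 * r - (xv - xu))
                = volume (Set.Icc (xv - r) (xu + r)) := by
                  rw [Real.volume_Icc]; congr 1; ring
              _ ≤ volume S := measure_mono hsub
    · -- short arc wraps around
      have hd : dL xu xv = 1 - (xv - xu) := by rw [hdL]; exact min_eq_right (by linarith)
      rw [hd] at h1 h2 ⊢
      rcases lt_or_ge xu r with hc | hc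
      · rcases lt_or_ge (1 - r) xv with hc2 | hc2
        · -- xu < r, xv > 1-r : pieces [0, xv-1+r] and [xu+1-r, 1]
          refine le_antisymm (hub.trans ?_) ?_
          · refine le_trans (ofReal_sum9_le (t1 := 0) (t2 := 0) (t3 := xv - 1 + r)
              (t4 := r - xu) (t5 := 0) (t6 := 0) (t7 := 0) (t8 := 0) (t9 := 0)
              (by linarith) (by linarith) (by linarith) (by linarith) (by linarith)
              (by linarith) (by linarith) (by linarith) (by linarith)
              le_rfl le_rfl (by linarith) (by linarith) le_rfl
              le_rfl le_rfl le_rfl le_rfl) ?_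
            exact ENNReal.ofReal_le_ofReal (by linarith)
          · have hsub : Set.Ico 0 (xv - 1 + r) ∪ Set.Ioc (xu + 1 - r) 1 ⊆ S := by
              rintro z (⟨hz0, hz1⟩ | ⟨hz0, hz1⟩)
              · exact ⟨Set.mem_Icc.mpr ⟨hz0, by linarith⟩,
                  dL_le_abs' (by linarith) (by linarith), dL_le_wrap_lo (by linarith)⟩
              · exact ⟨Set.mem_Icc.mpr ⟨by linarith, hz1⟩,
                  dL_le_wrap_hi (by linarith),
                  dL_le_abs' (by linarith) (by linarith)⟩
            have hdisj : Disjoint (Set.Ico 0 (xv - 1 + r)) (Set.Ioc (xu + 1 - r) 1) := by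
              rw [Set.disjoint_left]
              rintro z ⟨hz0, hz1⟩ ⟨hz0', hz1'⟩
              linarith
            calc ENNReal.ofReal (2 * r - (1 - (xv - xu)))
                = ENNReal.ofReal (xv - 1 + r - 0) + ENNReal.ofReal (1 - (xu + 1 - r)) := by
                  rw [← ENNReal.ofReal_add (by linarith) (by linarith)]; congr 1; ring
              _ = volume (Set.Ico 0 (xv - 1 + r) ∪ Set.Ioc (xu + 1 - r) 1) := by
                  rw [measure_union hdisj measurableSet_Ioc, Real.volume_Ico, Real.volume_Ioc]
              _ ≤ volume S := measure_mono hsub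
        · -- xu < r, xv ≤ 1-r : single piece [xu+1-r, xv+r]
          refine le_antisymm (hub.trans ?_) ?_
          · refine le_trans (ofReal_sum9_le (t1 := 0) (t2 := 0) (t3 := 0)
              (t4 := 2 * r - (1 - (xv - xu))) (t5 := 0) (t6 := 0) (t7 := 0) (t8 := 0)
              (t9 := 0)
              (by linarith) (by linarith) (by linarith) (by linarith) (by linarith)
              (by linarith) (by linarith) (by linarith) (by linarith)
              le_rfl le_rfl le_rfl (by linarith) le_rfl
              le_rfl le_rfl le_rfl le_rfl) ?_
            exact ENNReal.ofReal_le_ofReal (by linarith)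
          · have hsub : Set.Icc (xu + 1 - r) (xv + r) ⊆ S := by
              rintro z ⟨hz0, hz1⟩
              exact ⟨Set.mem_Icc.mpr ⟨by linarith, by linarith⟩,
                dL_le_wrap_hi (by linarith),
                dL_le_abs' (by linarith) (by linarith)⟩
            calc ENNReal.ofReal (2 * r - (1 - (xv - xu)))
                = volume (Set.Icc (xu + 1 - r) (xv + r)) := by
                  rw [Real.volume_Icc]; congr 1; ring
              _ ≤ volume S := measure_mono hsub
      · -- xu ≥ r : single piece [xu-r, xv-1+r]
        refine le_antisymm (hub.trans ?_) ?_
        · refine le_trans (ofReal_sum9_le (t1 := 0) (t2 := 0)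
            (t3 := 2 * r - (1 - (xv - xu))) (t4 := 0) (t5 := 0) (t6 := 0) (t7 := 0)
            (t8 := 0) (t9 := 0)
            (by linarith) (by linarith) (by linarith) (by linarith) (by linarith)
            (by linarith) (by linarith) (by linarith) (by linarith)
            le_rfl le_rfl (by linarith) le_rfl le_rfl
            le_rfl le_rfl le_rfl le_rfl) ?_
          exact ENNReal.ofReal_le_ofReal (by linarith)
        · have hsub : Set.Icc (xu - r) (xv - 1 + r) ⊆ S := by
            rintro z ⟨hz0, hz1⟩
            exact ⟨Set.mem_Icc.mpr ⟨by linarith, by linarith⟩,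
              dL_le_abs' (by linarith) (by linarith),
              dL_le_wrap_lo (by linarith)⟩
          calc ENNReal.ofReal (2 * r - (1 - (xv - xu)))
              = volume (Set.Icc (xu - r) (xv - 1 + r)) := by
                rw [Real.volume_Icc]; congr 1; ring
            _ ≤ volume S := measure_mono hsub
  · intro h
    rw [hdL, lt_min_iff] at h
    obtain ⟨hd1, hd2⟩ := h
    refine le_antisymm (hub.trans ?_) zero_le
    refine le_trans (ofReal_sum9_le (t1 := 0) (t2 := 0) (t3 := 0) (t4 := 0) (t5 := 0)
      (t6 := 0) (t7 := 0) (t8 := 0) (t9 := 0)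
      (by linarith) (by linarith) (by linarith) (by linarith) (by linarith)
      (by linarith) (by linarith) (by linarith) (by linarith)
      le_rfl le_rfl le_rfl le_rfl le_rfl le_rfl le_rfl le_rfl le_rfl) ?_
    simp

/-- measure of the set of common neighbors of two same-cluster
points at circular distance `x`, for radius `r`. -/
theorem gbm_common_neighbor_measure_same (xu xv r : ℝ)
    (hxu : xu ∈ Set.Icc (0 : ℝ) 1) (hxv : xv ∈ Set.Icc (0 : ℝ) 1)
    (hr : r ∈ Set.Icc (0 : ℝ) (1 / 2)) :
    (dL xu xv ≤ 2 * r ∧ dL xu xv + 2 * r ≤ 1 →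
      volume {z : ℝ | z ∈ Set.Icc (0 : ℝ) 1 ∧ dL z xu ≤ r ∧ dL z xv ≤ r}
        = ENNReal.ofReal (2 * r - dL xu xv)) ∧
    (2 * r < dL xu xv →
      volume {z : ℝ | z ∈ Set.Icc (0 : ℝ) 1 ∧ dL z xu ≤ r ∧ dL z xv ≤ r} = 0) := by
  rcases le_total xu xv with h | h
  · exact gbm_aux xu xv r hxu hxv hr h
  · have hd : dL xu xv = dL xv xu := by unfold dL; rw [abs_sub_comm]
    have hs : {z : ℝ | z ∈ Set.Icc (0:ℝ) 1 ∧ dL z xu ≤ r ∧ dL z xv ≤ r}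
        = {z : ℝ | z ∈ Set.Icc (0:ℝ) 1 ∧ dL z xv ≤ r ∧ dL z xu ≤ r} := by
      ext z; simp only [Set.mem_setOf_eq]; tauto
    rw [hd, hs]
    exact gbm_aux xv xu r hxv hxu hr h
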